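/- arXiv:1310.6167 — 4 statements merged into one kernel-verified Lean document; each statement's English description precedes it below -/
import Mathlib

section
/- Let u and v be convex functions on ℝⁿ, and let E be an open bounded set such that u = v on ∂E and u ≤ v in E. Then the image of E under the subdifferential of v is contained in the image of E under the subdifferential of u, i.e. ∂v(E) ⊆ ∂u(E). -/
open Set

/-- The subdifferential of `u` at `x`. -/
def subdiff {n : ℕ} (u : EuclideanSpace ℝ (Fin n) → ℝ) (x : EuclideanSpace ℝ (Fin n)) :
    Set (EuclideanSpace ℝ (Fin n)) :=
  {p | ∀ y, u x + (inner ℝ p (y - x) : ℝ) ≤ u y}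

/-- The image of a set under the subdifferential map. -/
def subimg {n : ℕ} (u : EuclideanSpace ℝ (Fin n) → ℝ) (E : Set (EuclideanSpace ℝ (Fin n))) :
    Set (EuclideanSpace ℝ (Fin n)) :=
  ⋃ x ∈ E, subdiff u x

theorem stmt0 {n : ℕ} (u v : EuclideanSpace ℝ (Fin n) → ℝ)
    (hu : ConvexOn ℝ Set.univ u) (hv : ConvexOn ℝ Set.univ v)
    (E : Set (EuclideanSpace ℝ (Fin n))) (hE : IsOpen E) (hEb : Bornology.IsBounded E)
    (hbd : ∀ x ∈ frontier E, u x = v x) (hle : ∀ x ∈ E, u x ≤ v x) :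
    subimg v E ⊆ subimg u E := by
  intro q hq
  simp only [subimg, mem_iUnion] at hq ⊢
  obtain ⟨x₀, hx₀, hp⟩ := hq
  -- the comparison function
  set w : EuclideanSpace ℝ (Fin n) → ℝ :=
    fun x => u x - (v x₀ + (inner ℝ q (x - x₀) : ℝ)) with hw
  have hucont : Continuous u := by
    rw [← continuousOn_univ]
    exact hu.continuousOn isOpen_univ
  have hwcont : Continuous w := by
    apply hucont.sub
    exact continuous_const.add ((continuous_const.inner (continuous_id.sub continuous_const)))
  -- w ≥ 0 on the frontier
  have hfr : ∀ x ∈ frontier E, 0 ≤ w x := by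
    intro x hx
    have := hp x
    have hux : u x = v x := hbd x hx
    simp only [hw, hux]
    linarith
  -- w x₀ ≤ 0
  have hwx₀ : w x₀ ≤ 0 := by
    simp only [hw, sub_self, inner_zero_right]
    have := hle x₀ hx₀
    linarith
  -- minimizer over closure E
  have hcomp : IsCompact (closure E) := hEb.isCompact_closure
  obtain ⟨x₂, hx₂, hmin₂⟩ := hcomp.exists_isMinOn ⟨x₀, subset_closure hx₀⟩
    hwcont.continuousOn
  -- obtain a minimizer in E
  obtain ⟨x₁, hx₁E, hmin⟩ : ∃ x₁ ∈ E, IsMinOn w (closure E) x₁ := by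
    by_cases h : w x₂ < 0
    · refine ⟨x₂, ?_, hmin₂⟩
      have : x₂ ∈ E ∪ frontier E := by
        have : closure E = E ∪ frontier E := by
          rw [hE.frontier_eq]
          rw [union_diff_self]
          exact (closure_eq_self_union_frontier E).symm ▸ by
            rw [union_comm]
            ext z; simp [closure_eq_self_union_frontier, or_comm]
        rwa [← this]
      rcases this with h' | h'
      · exact h'
      · exact absurd (hfr x₂ h') (by linarith)
    · refine ⟨x₀, hx₀, ?_⟩
      intro y hy
      have h1 := hmin₂ hy
      have h2 := hmin₂ (subset_closure hx₀)
      simp only [mem_setOf_eq] at h1 h2 ⊢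
      push_neg at h
      linarith
  -- x₁ works: q ∈ subdiff u x₁
  refine ⟨x₁, hx₁E, ?_⟩
  intro y
  -- find small t with x₁ + t • (y - x₁) ∈ E
  have htend : Filter.Tendsto (fun t : ℝ => x₁ + t • (y - x₁)) (nhds 0) (nhds x₁) := by
    have : Filter.Tendsto (fun t : ℝ => x₁ + t • (y - x₁)) (nhds 0)
        (nhds (x₁ + (0 : ℝ) • (y - x₁))) :=
      (tendsto_const_nhds.add ((continuous_id.smul continuous_const).tendsto 0))
    simpa using this
  have hEnhds : ∀ᶠ t : ℝ in nhds 0, x₁ + t • (y - x₁) ∈ E :=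
    htend.eventually (hE.mem_nhds hx₁E)
  have hsmall : ∃ t : ℝ, 0 < t ∧ t ≤ 1 ∧ x₁ + t • (y - x₁) ∈ E := by
    have h1 : ∀ᶠ t : ℝ in nhdsWithin 0 (Ioi 0), x₁ + t • (y - x₁) ∈ E :=
      Filter.Eventually.filter_mono nhdsWithin_le_nhds hEnhds
    have h2 : ∀ᶠ t : ℝ in nhdsWithin 0 (Ioi 0), t ∈ Ioc (0:ℝ) 1 :=
      Filter.eventually_of_mem (Ioc_mem_nhdsGT_of_mem (by norm_num)) (fun _ h => h)
    obtain ⟨t, ht1, ht2⟩ := (h1.and h2).exists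
    exact ⟨t, ht2.1, ht2.2, ht1⟩
  obtain ⟨t, ht0, ht1, htE⟩ := hsmall
  set z := x₁ + t • (y - x₁) with hz
  have hz' : z = (1 - t) • x₁ + t • y := by
    simp [hz, smul_sub, sub_smul]
    module
  -- convexity of u
  have hconv : u z ≤ (1 - t) * u x₁ + t * u y := by
    rw [hz']
    exact hu.2 (mem_univ x₁) (mem_univ y) (by linarith) (le_of_lt ht0) (by ring)
  -- linearity of the inner product part
  have hinner : (inner ℝ q (z - x₀) : ℝ)
      = (1 - t) * (inner ℝ q (x₁ - x₀) : ℝ) + t * (inner ℝ q (y - x₀) : ℝ) := by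
    have : z - x₀ = (1 - t) • (x₁ - x₀) + t • (y - x₀) := by
      rw [hz']; module
    rw [this, inner_add_right, inner_smul_right, inner_smul_right]
  -- w z ≤ (1-t) w x₁ + t w y
  have hwz : w z ≤ (1 - t) * w x₁ + t * w y := by
    simp only [hw, hinner]
    nlinarith [hconv]
  have hmin' : w x₁ ≤ w z := hmin (subset_closure htE)
  have hkey : w x₁ ≤ w y := by nlinarith
  -- unfold
  have hfin : (inner ℝ q (y - x₀) : ℝ) - (inner ℝ q (x₁ - x₀) : ℝ) = (inner ℝ q (y - x₁) : ℝ) := by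
    rw [← inner_sub_right]
    congr 1
    abel
  simp only [hw] at hkey
  linarith [hfin, hkey]
end

section
/- Any c-cyclically monotone set lies in the c-subdifferential of a c-convex function: Let X, Y be sets, c : X × Y → ℝ, and let S ⊆ X × Y be c-cyclically monotone and nonempty. Fix (x₀,y₀) ∈ S and define u(x) := sup over N ∈ ℕ and chains {(x_i,y_i)}_{1≤i≤N} ⊆ S of [c(x₀,y₀) − c(x₁,y₀)] + [c(x₁,y₁) − c(x₂,y₁)] + ⋯ + [c(x_N,y_N) − c(x,y_N)]. Then, whenever u is real-valued, u is c-convex and S ⊆ ⋃_{x∈X} {x} × ∂_c u(x). -/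
open Set

variable {X Y : Type*}

/-- `S` is `c`-cyclically monotone. -/
def CCyclicallyMonotone (c : X → Y → ℝ) (S : Set (X × Y)) : Prop :=
  ∀ (N : ℕ) (p : Fin (N + 1) → X × Y), (∀ i, p i ∈ S) →
    ∑ i, c (p i).1 (p i).2 ≤ ∑ i, c (p i).1 (p (i + 1)).2

/-- The set of values of the Rockafellar–Rüschendorf chains at `x`, based at `(x₀, y₀)`:
`[c(x₀,y₀) − c(x₁,y₀)] + ⋯ + [c(x_{N-1},y_{N-1}) − c(x_N,y_{N-1})] + [c(x_N,y_N) − c(x,y_N)]`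
over all chains `(x_i,y_i) ∈ S`. -/
def chainVals (c : X → Y → ℝ) (S : Set (X × Y)) (x₀ : X) (y₀ : Y) (x : X) : Set ℝ :=
  {r | ∃ (N : ℕ) (p : Fin (N + 1) → X × Y), (∀ i, p i ∈ S) ∧ p 0 = (x₀, y₀) ∧
    r = (∑ i : Fin N,
          (c (p i.castSucc).1 (p i.castSucc).2 - c (p i.succ).1 (p i.castSucc).2)) +
        (c (p (Fin.last N)).1 (p (Fin.last N)).2 - c x (p (Fin.last N)).2)}

private lemma chain_extend (c : X → Y → ℝ) (S : Set (X × Y)) (x₀ : X) (y₀ : Y)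
    (u : X → ℝ) (hu : ∀ x, IsLUB (chainVals c S x₀ y₀ x) (u x)) :
    ∀ q ∈ S, ∀ z : X, u q.1 + c q.1 q.2 - c z q.2 ≤ u z := by
  intro q hq z
  have h1 : u q.1 ≤ u z - c q.1 q.2 + c z q.2 := by
    apply (hu q.1).2
    rintro r ⟨N, p, hp, hp0, rfl⟩
    have hmem : (∑ i : Fin N,
          (c (p i.castSucc).1 (p i.castSucc).2 - c (p i.succ).1 (p i.castSucc).2)) +
        (c (p (Fin.last N)).1 (p (Fin.last N)).2 - c q.1 (p (Fin.last N)).2)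
          + c q.1 q.2 - c z q.2 ∈ chainVals c S x₀ y₀ z := by
      refine ⟨N + 1, Fin.snoc p q, ?_, ?_, ?_⟩
      · intro i
        induction i using Fin.lastCases with
        | last => simpa using hq
        | cast j => simpa using hp j
      · have : (0 : Fin (N + 2)) = Fin.castSucc 0 := rfl
        rw [this, Fin.snoc_castSucc, hp0]
      · rw [Fin.sum_univ_castSucc]
        simp only [Fin.succ_castSucc, Fin.snoc_castSucc, Fin.succ_last, Fin.snoc_last]
        ring
    have := (hu z).1 hmem
    linarith
  linarith

/-- Any `c`-cyclically monotone set is contained in the `c`-subdifferential of a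
`c`-convex function, namely of `u x = sup (chainVals c S x₀ y₀ x)`. -/
theorem stmt8 (c : X → Y → ℝ) (S : Set (X × Y)) (hS : CCyclicallyMonotone c S)
    (x₀ : X) (y₀ : Y) (h₀ : (x₀, y₀) ∈ S)
    (u : X → ℝ) (hu : ∀ x, IsLUB (chainVals c S x₀ y₀ x) (u x)) :
    -- `u` is `c`-convex: `u x = sup_y (u^c(y) − c(x,y))` where `u^c(y) = inf_z (u z + c z y)`
    (∀ x : X, IsLUB
        {r : ℝ | ∃ (y : Y) (s : ℝ), IsGLB {t : ℝ | ∃ z : X, t = u z + c z y} s ∧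
          r = s - c x y}
        (u x)) ∧
    -- `S ⊆ ⋃_x {x} × ∂_c u(x)`
    (∀ q ∈ S, ∀ z : X, u q.1 + c q.1 q.2 - c z q.2 ≤ u z) := by
  have key := chain_extend c S x₀ y₀ u hu
  refine ⟨fun x => ⟨?_, ?_⟩, key⟩
  · rintro r ⟨y, s, hs, rfl⟩
    have : u x + c x y ∈ {t : ℝ | ∃ z : X, t = u z + c z y} := ⟨x, rfl⟩
    have := hs.1 this
    linarith
  · intro b hb
    apply (hu x).2
    rintro r ⟨N, p, hp, hp0, rfl⟩
    set q := p (Fin.last N) with hqdef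
    have hq : q ∈ S := hp _
    set s : ℝ := u q.1 + c q.1 q.2 with hsdef
    have hglb : IsGLB {t : ℝ | ∃ z : X, t = u z + c z q.2} s := by
      constructor
      · rintro t ⟨z, rfl⟩
        have := key q hq z
        linarith
      · intro lb hlb
        exact hlb ⟨q.1, rfl⟩
    have hmem : s - c x q.2 ∈ {r : ℝ | ∃ (y : Y) (s : ℝ),
        IsGLB {t : ℝ | ∃ z : X, t = u z + c z y} s ∧ r = s - c x y} := ⟨q.2, s, hglb, rfl⟩
    have hb' := hb hmem
    have hA : (∑ i : Fin N,
          (c (p i.castSucc).1 (p i.castSucc).2 - c (p i.succ).1 (p i.castSucc).2)) +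
        (c (p (Fin.last N)).1 (p (Fin.last N)).2 - c q.1 (p (Fin.last N)).2)
          ∈ chainVals c S x₀ y₀ q.1 := ⟨N, p, hp, hp0, rfl⟩
    have hA' := (hu q.1).1 hA
    simp only [hsdef] at hb'
    linarith
end

section
/- If c : X × Y → ℝ is of class C² with uniformly bounded second x-derivatives (|D²_{xx} c(x,y)| ≤ C for all x ∈ X, y ∈ Y) and Y is bounded, then every real-valued c-convex function ψ on a convex open set X is semiconvex: ψ(x) + C|x|²/2 is convex on X. -/
open Set

/-- A `c`-convex function on `X`: `ψ(x) = sup_{y ∈ Y} [ψ^c(y) − c(x,y)]` where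
`ψ^c(y) = inf_{z ∈ X} [ψ(z) + c(z,y)]`. -/
def IsCConvexOn {n : ℕ} (X Y : Set (EuclideanSpace ℝ (Fin n)))
    (c : EuclideanSpace ℝ (Fin n) → EuclideanSpace ℝ (Fin n) → ℝ)
    (ψ : EuclideanSpace ℝ (Fin n) → ℝ) : Prop :=
  ∀ x ∈ X, IsLUB
    {r : ℝ | ∃ y ∈ Y, ∃ s : ℝ,
      IsGLB {t : ℝ | ∃ z ∈ X, t = ψ z + c z y} s ∧ r = s - c x y}
    (ψ x)

-- pointwise second-derivative bound
lemma snd_bound {n : ℕ} {X : Set (EuclideanSpace ℝ (Fin n))} (hXo : IsOpen X)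
    {f : EuclideanSpace ℝ (Fin n) → ℝ} {C : ℝ}
    (hb : ∀ x ∈ X, ‖iteratedFDerivWithin ℝ 2 f X x‖ ≤ C)
    {w : EuclideanSpace ℝ (Fin n)} (hw : w ∈ X) (v : EuclideanSpace ℝ (Fin n)) :
    fderiv ℝ (fderiv ℝ f) w v v ≤ C * ‖v‖ ^ 2 := by
  have h1 : iteratedFDeriv ℝ 2 f w ![v, v] = fderiv ℝ (fderiv ℝ f) w v v := by
    rw [iteratedFDeriv_two_apply]; norm_num
  have h2 : ‖iteratedFDeriv ℝ 2 f w ![v, v]‖ ≤ ‖iteratedFDeriv ℝ 2 f w‖ * (‖v‖ * ‖v‖) := by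
    have := (iteratedFDeriv ℝ 2 f w).le_opNorm ![v, v]
    simpa [Fin.prod_univ_two] using this
  have h3 : ‖iteratedFDeriv ℝ 2 f w‖ ≤ C := by
    rw [← iteratedFDerivWithin_of_isOpen 2 hXo hw]; exact hb w hw
  have h4 : ‖v‖ * ‖v‖ = ‖v‖ ^ 2 := by ring
  calc fderiv ℝ (fderiv ℝ f) w v v ≤ ‖iteratedFDeriv ℝ 2 f w ![v, v]‖ := by
        rw [h1] at *; exact le_abs_self _
    _ ≤ ‖iteratedFDeriv ℝ 2 f w‖ * (‖v‖ * ‖v‖) := h2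
    _ ≤ C * ‖v‖ ^ 2 := by rw [h4]; exact mul_le_mul_of_nonneg_right h3 (by positivity)

lemma quad_sub_convex {n : ℕ} {X : Set (EuclideanSpace ℝ (Fin n))}
    (hXc : Convex ℝ X) (hXo : IsOpen X)
    {f : EuclideanSpace ℝ (Fin n) → ℝ} {C : ℝ} (hf : ContDiffOn ℝ 2 f X)
    (hb : ∀ x ∈ X, ‖iteratedFDerivWithin ℝ 2 f X x‖ ≤ C) :
    ConvexOn ℝ X (fun x => C * ‖x‖ ^ 2 / 2 - f x) := by
  refine ⟨hXc, fun x hx z hz a b ha hb' hab => ?_⟩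
  set v := z - x with hv
  set L : Set ℝ := {t : ℝ | x + t • v ∈ X} with hL
  have hmem : ∀ t ∈ L, x + t • v ∈ X := fun t ht => ht
  have hLo : IsOpen L := hXo.preimage (by continuity)
  have hLc : Convex ℝ L := by
    have : L = (AffineMap.lineMap x z : ℝ →ᵃ[ℝ] _) ⁻¹' X := by
      ext t; simp [hL, AffineMap.lineMap_apply, hv, add_comm]
    rw [this]; exact hXc.affine_preimage _
  -- differentiability facts
  have hfd : ∀ t ∈ L, HasDerivAt (fun s : ℝ => f (x + s • v)) (fderiv ℝ f (x + t • v) v) t := by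
    intro t ht
    have hl : HasDerivAt (fun s : ℝ => x + s • v) v t := by
      simpa using ((hasDerivAt_id t).smul_const v).const_add x
    have : DifferentiableAt ℝ f (x + t • v) :=
      (hf.contDiffAt (hXo.mem_nhds (hmem t ht))).differentiableAt (by norm_num)
    exact this.hasFDerivAt.comp_hasDerivAt t hl
  set φ : ℝ → ℝ := fun t => C * ‖v‖ ^ 2 / 2 * t ^ 2 - f (x + t • v) with hφ
  set D : ℝ → ℝ := fun t => C * ‖v‖ ^ 2 * t - fderiv ℝ f (x + t • v) v with hD
  have hφd : ∀ t ∈ L, HasDerivAt φ (D t) t := by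
    intro t ht
    have h1 : HasDerivAt (fun t : ℝ => C * ‖v‖ ^ 2 / 2 * t ^ 2) (C * ‖v‖ ^ 2 * t) t := by
      have := (hasDerivAt_pow 2 t).const_mul (C * ‖v‖ ^ 2 / 2)
      exact this.congr_deriv (by rw [show (2:ℕ) - 1 = 1 from rfl]; push_cast; ring)
    exact h1.sub (hfd t ht)
  have hderiv_eq : ∀ t ∈ L, deriv φ t = D t := fun t ht => (hφd t ht).deriv
  have hDd : ∀ t ∈ L, HasDerivAt D (C * ‖v‖ ^ 2 - fderiv ℝ (fderiv ℝ f) (x + t • v) v v) t := by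
    intro t ht
    have hl : HasDerivAt (fun s : ℝ => x + s • v) v t := by
      simpa using ((hasDerivAt_id t).smul_const v).const_add x
    have hcd : ContDiffAt ℝ 1 (fderiv ℝ f) (x + t • v) := by
      have := hf.contDiffAt (hXo.mem_nhds (hmem t ht))
      exact this.fderiv_right (le_refl _)
    have h2 : HasDerivAt (fun s : ℝ => fderiv ℝ f (x + s • v))
        (fderiv ℝ (fderiv ℝ f) (x + t • v) v) t :=
      (hcd.differentiableAt (by norm_num)).hasFDerivAt.comp_hasDerivAt t hl
    have h3 : HasDerivAt (fun s : ℝ => fderiv ℝ f (x + s • v) v)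
        (fderiv ℝ (fderiv ℝ f) (x + t • v) v v) t := by
      simpa using h2.clm_apply (hasDerivAt_const t v)
    have h1 : HasDerivAt (fun s : ℝ => C * ‖v‖ ^ 2 * s) (C * ‖v‖ ^ 2) t := by
      simpa using (hasDerivAt_id t).const_mul (C * ‖v‖ ^ 2)
    exact h1.sub h3
  -- φ is convex on L
  have hφconv : ConvexOn ℝ L φ := by
    apply convexOn_of_deriv2_nonneg hLc
    · exact fun t ht => ((hφd t ht).differentiableAt).continuousAt.continuousWithinAt
    · rw [hLo.interior_eq]; exact fun t ht => ((hφd t ht).differentiableAt).differentiableWithinAt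
    · rw [hLo.interior_eq]
      intro t ht
      have : deriv φ =ᶠ[nhds t] D := by
        filter_upwards [hLo.mem_nhds ht] with s hs using hderiv_eq s hs
      exact (((hDd t ht).differentiableAt).congr_of_eventuallyEq this).differentiableWithinAt
    · rw [hLo.interior_eq]
      intro t ht
      have heq : deriv φ =ᶠ[nhds t] D := by
        filter_upwards [hLo.mem_nhds ht] with s hs using hderiv_eq s hs
      have : deriv^[2] φ t = deriv D t := by
        simp only [Function.iterate_succ, Function.iterate_zero, Function.comp_apply, id]
        exact heq.deriv_eq
      rw [this, (hDd t ht).deriv]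
      have := snd_bound hXo hb (hmem t ht) v
      linarith
  -- apply convexity of φ at 0, 1, with weights a b
  have h0 : (0 : ℝ) ∈ L := by simp [hL, hx]
  have h1 : (1 : ℝ) ∈ L := by simp [hL, hv, hz]
  have key := hφconv.2 h0 h1 ha hb' hab
  have hab' : a • x + b • z = x + b • v := by
    rw [hv, smul_sub]
    have ha' : a = 1 - b := by linarith
    rw [ha', sub_smul, one_smul]
    abel
  have hz' : z = x + v := by rw [hv]; abel
  have hnw : ‖x + b • v‖ ^ 2 = ‖x‖ ^ 2 + 2 * (b * (inner ℝ x v : ℝ)) + b ^ 2 * ‖v‖ ^ 2 := by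
    rw [norm_add_sq_real, real_inner_smul_right, norm_smul]
    simp [mul_pow]
  have hnz : ‖z‖ ^ 2 = ‖x‖ ^ 2 + 2 * (inner ℝ x v : ℝ) + ‖v‖ ^ 2 := by
    rw [hz', norm_add_sq_real]
  simp only [hφ, zero_smul, add_zero, one_smul, mul_zero, mul_one, zero_add] at key
  norm_num at key
  show C * ‖a • x + b • z‖ ^ 2 / 2 - f (a • x + b • z) ≤
      a * (C * ‖x‖ ^ 2 / 2 - f x) + b * (C * ‖z‖ ^ 2 / 2 - f z)
  rw [← hz'] at key
  rw [hab', hnw, hnz]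
  have ha2 : a = 1 - b := by linarith
  subst ha2
  nlinarith [key]

/-- `c`-convex functions are semiconvex when `c` is `C²` with bounded second
`x`-derivatives and `Y` is bounded. -/
theorem stmt11 {n : ℕ} (X Y : Set (EuclideanSpace ℝ (Fin n)))
    (hXc : Convex ℝ X) (hXo : IsOpen X) (hY : Bornology.IsBounded Y)
    (c : EuclideanSpace ℝ (Fin n) → EuclideanSpace ℝ (Fin n) → ℝ)
    (C : ℝ)
    (hc : ∀ y ∈ Y, ContDiffOn ℝ 2 (fun x => c x y) X)
    (hbound : ∀ y ∈ Y, ∀ x ∈ X, ‖iteratedFDerivWithin ℝ 2 (fun x' => c x' y) X x‖ ≤ C)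
    (ψ : EuclideanSpace ℝ (Fin n) → ℝ)
    (hψ : IsCConvexOn X Y c ψ) :
    ConvexOn ℝ X (fun x => ψ x + C * ‖x‖ ^ 2 / 2) := by
  refine ⟨hXc, fun x hx z hz a b ha hb hab => ?_⟩
  have hw : a • x + b • z ∈ X := hXc hx hz ha hb hab
  set w := a • x + b • z with hwdef
  -- reduce to upper bound on the sup set at w
  have hsup := hψ w hw
  have hub : ∀ r ∈ {r : ℝ | ∃ y ∈ Y, ∃ s : ℝ,
      IsGLB {t : ℝ | ∃ z ∈ X, t = ψ z + c z y} s ∧ r = s - c w y},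
      r ≤ a * (ψ x + C * ‖x‖ ^ 2 / 2) + b * (ψ z + C * ‖z‖ ^ 2 / 2) - C * ‖w‖ ^ 2 / 2 := by
    rintro r ⟨y, hy, s, hs, rfl⟩
    have hmemx : s - c x y ∈ {r : ℝ | ∃ y ∈ Y, ∃ s : ℝ,
        IsGLB {t : ℝ | ∃ z ∈ X, t = ψ z + c z y} s ∧ r = s - c x y} := ⟨y, hy, s, hs, rfl⟩
    have hmemz : s - c z y ∈ {r : ℝ | ∃ y' ∈ Y, ∃ s' : ℝ,
        IsGLB {t : ℝ | ∃ z' ∈ X, t = ψ z' + c z' y'} s' ∧ r = s' - c z y'} := ⟨y, hy, s, hs, rfl⟩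
    have hx1 : s - c x y ≤ ψ x := (hψ x hx).1 hmemx
    have hz1 : s - c z y ≤ ψ z := (hψ z hz).1 hmemz
    have hconv := quad_sub_convex hXc hXo (hc y hy) (hbound y hy)
    have hq := hconv.2 hx hz ha hb hab
    simp only [smul_eq_mul] at hq
    -- hq : C‖w‖²/2 - c w y ≤ a (C‖x‖²/2 - c x y) + b (C‖z‖²/2 - c z y)
    have h1 : a * (s - c x y) ≤ a * ψ x := mul_le_mul_of_nonneg_left hx1 ha
    have h2 : b * (s - c z y) ≤ b * ψ z := mul_le_mul_of_nonneg_left hz1 hb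
    have hs2 : a * s + b * s = s := by rw [← add_mul, hab, one_mul]
    ring_nf at hq h1 h2 hs2 ⊢
    linarith [hq, h1, h2, hs2]
  have := (hsup.2 : ψ w ∈ lowerBounds _)
  have hle : ψ w ≤ a * (ψ x + C * ‖x‖ ^ 2 / 2) + b * (ψ z + C * ‖z‖ ^ 2 / 2) - C * ‖w‖ ^ 2 / 2 :=
    hsup.2 hub
  simp only [smul_eq_mul]
  linarith
end

section
/- Let u : ℝⁿ → ℝ be convex and suppose the gradient map pushes f dx forward to g dy with f supported in X and g supported in Y, g > 0 on Y. If for a Borel set A ⊆ X one has ∂u(A) ⊆ Y up to a Lebesgue-null set, then the Monge-Ampère measure satisfies μ_u(A) = ∫_A f(x)/g(∇u(x)) dx. -/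
open Set MeasureTheory

open Metric Filter

lemma null_nondiff_interior {n : ℕ} {v : EuclideanSpace ℝ (Fin n) → ℝ} {K : NNReal}
    {t : Set (EuclideanSpace ℝ (Fin n))} (hlip : LipschitzOnWith K v t) :
    volume {z | z ∈ interior t ∧ ¬ DifferentiableAt ℝ v z} = 0 := by
  have h := hlip.ae_differentiableWithinAt_of_mem (μ := volume)
  rw [ae_iff] at h
  refine measure_mono_null ?_ h
  rintro z ⟨hzt, hznd⟩
  simp only [mem_setOf_eq, Classical.not_imp]
  refine ⟨interior_subset hzt, fun hdw => hznd ?_⟩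
  exact hdw.differentiableAt (mem_interior_iff_mem_nhds.1 hzt)

lemma null_nondiff_of_locallyLipschitzOn {n : ℕ} {v : EuclideanSpace ℝ (Fin n) → ℝ}
    {C : Set (EuclideanSpace ℝ (Fin n))} (hC : IsOpen C) (hv : LocallyLipschitzOn C v) :
    volume {z | z ∈ C ∧ ¬ DifferentiableAt ℝ v z} = 0 := by
  refine measure_null_of_locally_null _ fun y hy => ?_
  obtain ⟨K, t, ht, hlip⟩ := hv hy.1
  rw [hC.nhdsWithin_eq hy.1] at ht
  refine ⟨{z | z ∈ C ∧ ¬ DifferentiableAt ℝ v z} ∩ interior t, ?_, ?_⟩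
  · exact inter_mem_nhdsWithin _ (isOpen_interior.mem_nhds (mem_interior_iff_mem_nhds.2 ht))
  · exact measure_mono_null (fun z (hz : z ∈ _ ∩ _) => show z ∈ interior _ ∧ _ from ⟨hz.2, hz.1.2⟩) (null_nondiff_interior hlip)

lemma null_nondiff_of_convexOn {n : ℕ} {v : EuclideanSpace ℝ (Fin n) → ℝ}
    (hv : ConvexOn ℝ univ v) :
    volume {z : EuclideanSpace ℝ (Fin n) | ¬ DifferentiableAt ℝ v z} = 0 := by
  have h := null_nondiff_of_locallyLipschitzOn (isOpen_univ)
    (hv.locallyLipschitzOn isOpen_univ)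
  simpa using h

lemma grad_mem_subdiff {n : ℕ} {u : EuclideanSpace ℝ (Fin n) → ℝ} (hu : ConvexOn ℝ Set.univ u)
    {x : EuclideanSpace ℝ (Fin n)} (hd : DifferentiableAt ℝ u x) :
    gradient u x ∈ subdiff u x := by
  intro y
  set c : ℝ := inner ℝ (gradient u x) (y - x) with hc
  have hF : HasFDerivAt u ((InnerProductSpace.toDual ℝ _) (gradient u x)) x :=
    hasGradientAt_iff_hasFDerivAt.1 hd.hasGradientAt
  have hline : HasDerivAt (fun t : ℝ => x + t • (y - x)) (y - x) 0 := by
    simpa using ((hasDerivAt_id (0:ℝ)).smul_const (y - x)).const_add x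
  have h0 : x + (0:ℝ) • (y - x) = x := by simp
  have hφ : HasDerivAt (fun t : ℝ => u (x + t • (y - x))) c 0 := by
    have hF' : HasFDerivAt u ((InnerProductSpace.toDual ℝ _) (gradient u x))
        ((fun t : ℝ => x + t • (y - x)) 0) := by rw [show (fun t : ℝ => x + t • (y - x)) 0 = x by simp]; exact hF
    have := hF'.comp_hasDerivAt (0:ℝ) hline
    simpa [InnerProductSpace.toDual_apply_apply, hc, Function.comp_def] using this
  have hslope : Filter.Tendsto (slope (fun t : ℝ => u (x + t • (y - x))) 0) (nhdsWithin 0 {(0:ℝ)}ᶜ) (nhds c) :=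
    hasDerivAt_iff_tendsto_slope.1 hφ
  have hslope' : Filter.Tendsto (slope (fun t : ℝ => u (x + t • (y - x))) 0) (nhdsWithin 0 (Ioi (0:ℝ))) (nhds c) :=
    hslope.mono_left (nhdsWithin_mono _ (fun t ht => ne_of_gt ht))
  have hb : ∀ᶠ t in nhdsWithin 0 (Ioi (0:ℝ)),
      slope (fun t : ℝ => u (x + t • (y - x))) 0 t ≤ u y - u x := by
    filter_upwards [Ioc_mem_nhdsGT_of_mem ⟨le_refl (0:ℝ), zero_lt_one⟩] with t ht
    have hcombo : (1 - t) • x + t • y = x + t • (y - x) := by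
      rw [sub_smul, smul_sub, one_smul]; abel
    have h1 : u (x + t • (y - x)) ≤ (1 - t) * u x + t * u y := by
      have := hu.2 (mem_univ x) (mem_univ y)
        (by linarith [ht.2] : (0:ℝ) ≤ 1 - t) (le_of_lt ht.1) (by ring)
      rw [hcombo] at this
      simpa [smul_eq_mul] using this
    rw [slope_def_field]
    rw [div_le_iff₀ (by simpa using ht.1)]
    simp only [sub_zero, h0]
    nlinarith [ht.1, ht.2]
  have hle : c ≤ u y - u x := le_of_tendsto hslope' hb
  linarith

lemma subgrad_toDual_eq {n : ℕ} {v : EuclideanSpace ℝ (Fin n) → ℝ}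
    {s : Set (EuclideanSpace ℝ (Fin n))} {y p : EuclideanSpace ℝ (Fin n)}
    (hs : s ∈ nhds y) (hp : ∀ z ∈ s, v y + (inner ℝ p (z - y) : ℝ) ≤ v z)
    (hd : DifferentiableAt ℝ v y) :
    (InnerProductSpace.toDual ℝ (EuclideanSpace ℝ (Fin n))) p = fderiv ℝ v y := by
  set ψ : EuclideanSpace ℝ (Fin n) → ℝ := fun z => v z - (inner ℝ p (z - y) : ℝ) with hψ
  have hmin : IsLocalMin ψ y := by
    have : ∀ᶠ z in nhds y, ψ y ≤ ψ z := by
      filter_upwards [hs] with z hz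
      have h1 := hp z hz
      simp only [ψ, sub_self, inner_zero_right, sub_zero]
      linarith
    exact this
  have h1 : HasFDerivAt (fun z : EuclideanSpace ℝ (Fin n) => (inner ℝ p (z - y) : ℝ))
      ((InnerProductSpace.toDual ℝ (EuclideanSpace ℝ (Fin n))) p) y := by
    have h2 : HasFDerivAt (fun z : EuclideanSpace ℝ (Fin n) => z - y)
        (ContinuousLinearMap.id ℝ _) y := (hasFDerivAt_id y).sub_const y
    have h3 := ((InnerProductSpace.toDual ℝ (EuclideanSpace ℝ (Fin n))) p).hasFDerivAt.comp y h2
    simpa [Function.comp_def, InnerProductSpace.toDual_apply_apply] using h3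
  have hdψ : HasFDerivAt ψ
      (fderiv ℝ v y - (InnerProductSpace.toDual ℝ (EuclideanSpace ℝ (Fin n))) p) y :=
    hd.hasFDerivAt.sub h1
  have h0 := hmin.fderiv_eq_zero
  rw [hdψ.fderiv, sub_eq_zero] at h0
  exact h0.symm

lemma subgrad_unique {n : ℕ} {v : EuclideanSpace ℝ (Fin n) → ℝ}
    {s : Set (EuclideanSpace ℝ (Fin n))} {y p q : EuclideanSpace ℝ (Fin n)}
    (hs : s ∈ nhds y) (hp : ∀ z ∈ s, v y + (inner ℝ p (z - y) : ℝ) ≤ v z)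
    (hq : ∀ z ∈ s, v y + (inner ℝ q (z - y) : ℝ) ≤ v z)
    (hd : DifferentiableAt ℝ v y) : p = q := by
  have h1 := subgrad_toDual_eq hs hp hd
  have h2 := subgrad_toDual_eq hs hq hd
  exact (InnerProductSpace.toDual ℝ (EuclideanSpace ℝ (Fin n))).injective (h1.trans h2.symm)

def badSet {n : ℕ} (u : EuclideanSpace ℝ (Fin n) → ℝ) : Set (EuclideanSpace ℝ (Fin n)) :=
  {y | ∃ x₁ x₂, x₁ ≠ x₂ ∧ y ∈ subdiff u x₁ ∧ y ∈ subdiff u x₂}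

lemma badSet_null {n : ℕ} {u : EuclideanSpace ℝ (Fin n) → ℝ} (hu : ConvexOn ℝ Set.univ u) :
    volume (badSet u) = 0 := by
  classical
  set F : EuclideanSpace ℝ (Fin n) → EuclideanSpace ℝ (Fin n) → ℝ :=
    fun y x => (inner ℝ x y : ℝ) - u x with hF
  set dom : Set (EuclideanSpace ℝ (Fin n)) := {y | BddAbove (Set.range (F y))} with hdomdef
  set v : EuclideanSpace ℝ (Fin n) → ℝ := fun y => sSup (Set.range (F y)) with hv
  have hub : ∀ {x y : EuclideanSpace ℝ (Fin n)}, y ∈ subdiff u x → ∀ x', F y x' ≤ F y x := by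
    intro x y hy x'
    have h1 := hy x'
    rw [inner_sub_right] at h1
    simp only [F]
    have e1 : (inner ℝ x' y : ℝ) = inner ℝ y x' := real_inner_comm _ _
    have e2 : (inner ℝ x y : ℝ) = inner ℝ y x := real_inner_comm _ _
    linarith
  have hdom_mem : ∀ {x y : EuclideanSpace ℝ (Fin n)}, y ∈ subdiff u x → y ∈ dom := by
    intro x y hy
    exact ⟨F y x, by rintro _ ⟨x', rfl⟩; exact hub hy x'⟩
  have hval : ∀ {x y : EuclideanSpace ℝ (Fin n)}, y ∈ subdiff u x → v y = F y x := by
    intro x y hy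
    exact IsGreatest.csSup_eq ⟨⟨x, rfl⟩, by rintro _ ⟨x', rfl⟩; exact hub hy x'⟩
  have hsub : ∀ {x y : EuclideanSpace ℝ (Fin n)}, y ∈ subdiff u x →
      ∀ z ∈ dom, v y + (inner ℝ x (z - y) : ℝ) ≤ v z := by
    intro x y hy z hz
    have h1 : F z x ≤ v z := le_csSup hz ⟨x, rfl⟩
    have h2 : v y = F y x := hval hy
    simp only [F] at h1 h2
    rw [inner_sub_right]
    linarith
  have hconvdom : Convex ℝ dom := by
    rintro y₁ hy₁ y₂ hy₂ a b ha hb hab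
    obtain ⟨M₁, hM₁⟩ := hy₁
    obtain ⟨M₂, hM₂⟩ := hy₂
    refine ⟨a * M₁ + b * M₂, ?_⟩
    rintro _ ⟨x, rfl⟩
    have e1 : F (a • y₁ + b • y₂) x = a * ((inner ℝ x y₁ : ℝ) - u x) + b * ((inner ℝ x y₂ : ℝ) - u x) := by
      simp only [F, inner_add_right, real_inner_smul_right]
      linear_combination (u x) * hab
    have l1 : (inner ℝ x y₁ : ℝ) - u x ≤ M₁ := hM₁ ⟨x, rfl⟩
    have l2 : (inner ℝ x y₂ : ℝ) - u x ≤ M₂ := hM₂ ⟨x, rfl⟩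
    rw [e1]
    have := mul_le_mul_of_nonneg_left l1 ha
    have := mul_le_mul_of_nonneg_left l2 hb
    linarith
  have hconv : ConvexOn ℝ dom v := by
    refine ⟨hconvdom, ?_⟩
    rintro y₁ hy₁ y₂ hy₂ a b ha hb hab
    refine csSup_le ⟨F _ 0, ⟨0, rfl⟩⟩ ?_
    rintro _ ⟨x, rfl⟩
    have e1 : F (a • y₁ + b • y₂) x = a * (F y₁ x) + b * (F y₂ x) := by
      simp only [F, inner_add_right, real_inner_smul_right]
      linear_combination (u x) * hab
    have l1 : F y₁ x ≤ v y₁ := le_csSup hy₁ ⟨x, rfl⟩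
    have l2 : F y₂ x ≤ v y₂ := le_csSup hy₂ ⟨x, rfl⟩
    have := mul_le_mul_of_nonneg_left l1 ha
    have := mul_le_mul_of_nonneg_left l2 hb
    simp only [smul_eq_mul]
    linarith
  have hLL : LocallyLipschitzOn (interior dom) v :=
    (hconv.subset interior_subset hconvdom.interior).locallyLipschitzOn isOpen_interior
  have hsubset : badSet u ⊆ frontier dom ∪ {z | z ∈ interior dom ∧ ¬ DifferentiableAt ℝ v z} := by
    rintro y ⟨x₁, x₂, hne, h1, h2⟩
    have hydom : y ∈ dom := hdom_mem h1
    by_cases hyi : y ∈ interior dom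
    · right
      refine ⟨hyi, fun hdiff => hne ?_⟩
      have hdnhds : dom ∈ nhds y :=
        mem_nhds_iff.2 ⟨interior dom, interior_subset, isOpen_interior, hyi⟩
      exact subgrad_unique hdnhds (hsub h1) (hsub h2) hdiff
    · left
      exact ⟨subset_closure hydom, hyi⟩
  refine measure_mono_null hsubset (measure_union_null ?_ ?_)
  · exact hconvdom.addHaar_frontier volume
  · exact null_nondiff_of_locallyLipschitzOn isOpen_interior hLL

lemma isClosed_subimg {n : ℕ} {u : EuclideanSpace ℝ (Fin n) → ℝ} (hc : Continuous u)
    {K : Set (EuclideanSpace ℝ (Fin n))} (hK : IsCompact K) : IsClosed (subimg u K) := by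
  refine IsSeqClosed.isClosed ?_
  intro ys y hmem hy
  have hex : ∀ m, ∃ x, x ∈ K ∧ ys m ∈ subdiff u x := by
    intro m
    have := hmem m
    simpa [subimg, mem_iUnion] using this
  choose xs hxsK hxs using hex
  obtain ⟨x, hxK, φ, hφ, hconv⟩ := hK.tendsto_subseq hxsK
  have hyx : y ∈ subdiff u x := by
    intro z
    have t1 : Tendsto (fun m => u (xs (φ m))) atTop (nhds (u x)) :=
      (hc.continuousAt.tendsto).comp hconv
    have t2 : Tendsto (fun m => (inner ℝ (ys (φ m)) (z - xs (φ m)) : ℝ)) atTop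
        (nhds (inner ℝ y (z - x) : ℝ)) :=
      Tendsto.inner (hy.comp hφ.tendsto_atTop) (tendsto_const_nhds.sub hconv)
    exact le_of_tendsto (t1.add t2) (Eventually.of_forall fun m => hxs (φ m) z)
  exact mem_biUnion hxK hyx

lemma exists_compact_exhaustion_open {n : ℕ} {U : Set (EuclideanSpace ℝ (Fin n))}
    (hU : IsOpen U) :
    ∃ K : ℕ → Set (EuclideanSpace ℝ (Fin n)),
      (∀ m, IsCompact (K m)) ∧ (∀ m, K m ⊆ U) ∧ U = ⋃ m, K m := by
  set K : ℕ → Set (EuclideanSpace ℝ (Fin n)) :=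
    fun m => {x | ‖x‖ ≤ m ∧ ∀ z ∉ U, 1 / (m + 1 : ℝ) ≤ dist x z} with hKdef
  have hKU : ∀ m, K m ⊆ U := by
    intro m x hx
    by_contra hxU
    have h := hx.2 x hxU
    rw [dist_self] at h
    have : (0:ℝ) < 1 / (m + 1 : ℝ) := by positivity
    linarith
  refine ⟨K, ?_, hKU, ?_⟩
  · intro m
    apply Metric.isCompact_of_isClosed_isBounded
    · have h1 : IsClosed {x : EuclideanSpace ℝ (Fin n) | ‖x‖ ≤ (m:ℝ)} :=
        isClosed_le continuous_norm continuous_const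
      have h2 : IsClosed {x : EuclideanSpace ℝ (Fin n) | ∀ z ∉ U, 1 / (m + 1 : ℝ) ≤ dist x z} := by
        rw [setOf_forall]
        refine isClosed_iInter fun z => ?_
        by_cases hz : z ∈ U
        · simp only [hz, not_true_eq_false, false_implies, setOf_true]
          exact isClosed_univ
        · simp only [hz, not_false_eq_true, true_implies]
          exact isClosed_le continuous_const (Continuous.dist continuous_id continuous_const)
      exact h1.inter h2
    · refine (Metric.isBounded_closedBall (x := (0 : EuclideanSpace ℝ (Fin n))) (r := m)).subset ?_
      intro x hx
      exact mem_closedBall_zero_iff.2 hx.1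
  · ext x
    simp only [mem_iUnion]
    constructor
    · intro hx
      obtain ⟨ε, hε, hball⟩ := Metric.isOpen_iff.1 hU x hx
      obtain ⟨m, hm⟩ := exists_nat_ge (max ‖x‖ (1/ε))
      refine ⟨m, le_trans (le_max_left _ _) hm, ?_⟩
      intro z hz
      have hd : ε ≤ dist x z := by
        by_contra h
        push_neg at h
        exact hz (hball (by rwa [Metric.mem_ball, dist_comm]))
      have h1 : 1/ε ≤ (m:ℝ) := le_trans (le_max_right _ _) hm
      have hε' : 1/(m+1:ℝ) ≤ ε := by
        rw [div_le_iff₀ (by positivity)]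
        have h2 : 1 = ε * (1/ε) := by field_simp
        calc (1:ℝ) = ε * (1/ε) := h2
          _ ≤ ε * (m+1) := by nlinarith
      linarith
    · rintro ⟨m, hm⟩
      exact hKU m hm

lemma core_calc {n : ℕ} (Y : Set (EuclideanSpace ℝ (Fin n))) (hYm : MeasurableSet Y)
    (f g : EuclideanSpace ℝ (Fin n) → ℝ) (lam : ℝ) (hlam : 0 < lam)
    (hf_nonneg : ∀ x, 0 ≤ f x)
    (hgY : ∀ y ∈ Y, lam ≤ g y)
    (hfm : Measurable f) (hgm : Measurable g)
    (u : EuclideanSpace ℝ (Fin n) → ℝ) (hu : ConvexOn ℝ Set.univ u)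
    (hum : Measurable fun x => gradient u x)
    (hpush : Measure.map (fun x => gradient u x)
        (volume.withDensity fun x => ENNReal.ofReal (f x)) =
      volume.withDensity fun y => ENNReal.ofReal (g y))
    (hgzero : ∀ y ∉ Y, g y = 0)
    (E : Set (EuclideanSpace ℝ (Fin n))) (hE : MeasurableSet E)
    (hB : MeasurableSet (subimg u E ∩ Y)) :
    volume (subimg u E ∩ Y) = ∫⁻ x in E, ENNReal.ofReal (f x / g (gradient u x)) := by
  set T : EuclideanSpace ℝ (Fin n) → EuclideanSpace ℝ (Fin n) := fun x => gradient u x with hT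
  set ν : Measure (EuclideanSpace ℝ (Fin n)) :=
    volume.withDensity fun x => ENNReal.ofReal (f x) with hν
  set B : Set (EuclideanSpace ℝ (Fin n)) := subimg u E ∩ Y with hBdef
  have hinv_meas : Measurable fun y => ENNReal.ofReal (1 / g y) :=
    (measurable_const.div hgm).ennreal_ofReal
  -- Step 1 : volume B = ∫⁻ y in B, ofReal (1/g y) ∂(withDensity g)
  have step1 : volume B = ∫⁻ y in B, ENNReal.ofReal (1 / g y)
      ∂(volume.withDensity fun y => ENNReal.ofReal (g y)) := by
    rw [restrict_withDensity hB,
      lintegral_withDensity_eq_lintegral_mul _ hgm.ennreal_ofReal hinv_meas]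
    have : ∫⁻ y in B, ((fun y => ENNReal.ofReal (g y)) * fun y => ENNReal.ofReal (1 / g y)) y
        ∂volume = ∫⁻ _ in B, (1:ENNReal) ∂volume := by
      refine setLIntegral_congr_fun hB (fun y hy => ?_)
      have hgy : 0 < g y := lt_of_lt_of_le hlam (hgY y hy.2)
      simp only [Pi.mul_apply]
      rw [← ENNReal.ofReal_mul hgy.le, mul_one_div_cancel hgy.ne', ENNReal.ofReal_one]
    rw [this, setLIntegral_one]
  -- Step 2 : push forward
  have step2 : ∫⁻ y in B, ENNReal.ofReal (1 / g y)
      ∂(volume.withDensity fun y => ENNReal.ofReal (g y))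
      = ∫⁻ x in T ⁻¹' B, ENNReal.ofReal (1 / g (T x)) ∂ν := by
    rw [← hpush, setLIntegral_map hB hinv_meas hum]
  -- null sets
  have hνac : ν ≪ volume := withDensity_absolutelyContinuous _ _
  have hGnull : volume {x : EuclideanSpace ℝ (Fin n) | ¬ DifferentiableAt ℝ u x} = 0 :=
    null_nondiff_of_convexOn hu
  set Dh : Set (EuclideanSpace ℝ (Fin n)) := toMeasurable volume (badSet u) with hDhdef
  have hDh_m : MeasurableSet Dh := measurableSet_toMeasurable _ _
  have hDh0 : volume Dh = 0 := by
    rw [hDhdef, measure_toMeasurable]; exact badSet_null hu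
  have hνTD : ν (T ⁻¹' Dh) = 0 := by
    have h1 : ν (T ⁻¹' Dh) = (Measure.map T ν) Dh := (Measure.map_apply hum hDh_m).symm
    rw [h1, hpush]
    exact (withDensity_absolutelyContinuous _ _) hDh0
  have hae : ∀ᵐ x ∂ν, DifferentiableAt ℝ u x ∧ T x ∉ Dh := by
    have h1 : ∀ᵐ x ∂ν, DifferentiableAt ℝ u x := by
      rw [ae_iff]
      exact hνac hGnull
    have h2 : ∀ᵐ x ∂ν, T x ∉ Dh := by
      rw [ae_iff]
      simp only [not_not]; exact hνTD
    exact h1.and h2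
  -- Step 3 : a.e. identification of the preimage
  have hsetae : T ⁻¹' B =ᵐ[ν] ((E ∩ (T ⁻¹' Y)) : Set (EuclideanSpace ℝ (Fin n))) := by
    rw [eventuallyEq_set]
    filter_upwards [hae] with x hx
    obtain ⟨hxd, hxD⟩ := hx
    have hgrad : T x ∈ subdiff u x := grad_mem_subdiff hu hxd
    constructor
    · rintro ⟨hximg, hxY⟩
      obtain ⟨x', hx'E, hTx'⟩ := by
        simpa [subimg, mem_iUnion] using hximg
      by_cases hxx : x' = x
      · exact ⟨hxx ▸ hx'E, hxY⟩
      · exfalso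
        exact hxD (subset_toMeasurable _ _ ⟨x', x, hxx, hTx', hgrad⟩)
    · rintro ⟨hxE, hxY⟩
      exact ⟨mem_biUnion hxE hgrad, hxY⟩
  have step3 : ∫⁻ x in T ⁻¹' B, ENNReal.ofReal (1 / g (T x)) ∂ν
      = ∫⁻ x in E ∩ (T ⁻¹' Y), ENNReal.ofReal (1 / g (T x)) ∂ν :=
    setLIntegral_congr hsetae
  -- Step 4 : unfold density
  have hP : MeasurableSet ((T ⁻¹' Y)) := hum hYm
  have step4 : ∫⁻ x in E ∩ (T ⁻¹' Y), ENNReal.ofReal (1 / g (T x)) ∂ν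
      = ∫⁻ x in E ∩ (T ⁻¹' Y), ENNReal.ofReal (f x) * ENNReal.ofReal (1 / g (T x)) ∂volume := by
    have hcomp : Measurable fun x => ENNReal.ofReal (1 / g (T x)) := hinv_meas.comp hum
    rw [hν, restrict_withDensity (hE.inter hP),
      lintegral_withDensity_eq_lintegral_mul _ hfm.ennreal_ofReal hcomp]
    rfl
  -- Step 5 : reassemble the integrand
  have step5 : ∫⁻ x in E, ENNReal.ofReal (f x / g (T x)) ∂volume
      = ∫⁻ x in E ∩ (T ⁻¹' Y), ENNReal.ofReal (f x) * ENNReal.ofReal (1 / g (T x)) ∂volume := by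
    have hEeq : E = (E ∩ (T ⁻¹' Y)) ∪ (E \ (T ⁻¹' Y)) := (inter_union_diff E _).symm
    have hdisj : Disjoint (E ∩ (T ⁻¹' Y)) (E \ (T ⁻¹' Y)) :=
      Set.disjoint_left.2 fun x hx1 hx2 => hx2.2 hx1.2
    rw [show ∫⁻ x in E, ENNReal.ofReal (f x / g (T x)) ∂volume
        = ∫⁻ x in (E ∩ (T ⁻¹' Y)) ∪ (E \ (T ⁻¹' Y)), ENNReal.ofReal (f x / g (T x)) ∂volume by
      rw [← hEeq]]
    rw [lintegral_union (hE.diff hP) hdisj]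
    have hz : ∫⁻ x in E \ (T ⁻¹' Y), ENNReal.ofReal (f x / g (T x)) ∂volume = 0 := by
      have : ∫⁻ x in E \ (T ⁻¹' Y), ENNReal.ofReal (f x / g (T x)) ∂volume
          = ∫⁻ _ in E \ (T ⁻¹' Y), (0:ENNReal) ∂volume := by
        refine setLIntegral_congr_fun (hE.diff hP) (fun x hx => ?_)
        rw [hgzero (T x) hx.2, div_zero, ENNReal.ofReal_zero]
      rw [this, lintegral_zero]
    have hmain : ∫⁻ x in E ∩ (T ⁻¹' Y), ENNReal.ofReal (f x / g (T x)) ∂volume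
        = ∫⁻ x in E ∩ (T ⁻¹' Y), ENNReal.ofReal (f x) * ENNReal.ofReal (1 / g (T x)) ∂volume := by
      refine setLIntegral_congr_fun (hE.inter hP) (fun x _ => ?_)
      rw [← ENNReal.ofReal_mul (hf_nonneg x), mul_one_div]
    rw [hz, add_zero, hmain]
  rw [step1, step2, step3, step4, ← step5]

/-- If `∂u(A) ⊆ Y` up to a null set, then the Monge-Ampère measure of `u` on `A`
equals `∫_A f / (g ∘ ∇u)`. -/
theorem stmt18 {n : ℕ} (X Y : Set (EuclideanSpace ℝ (Fin n)))
    (hXo : IsOpen X) (hXb : Bornology.IsBounded X)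
    (hYo : IsOpen Y) (hYb : Bornology.IsBounded Y)
    (f g : EuclideanSpace ℝ (Fin n) → ℝ) (lam : ℝ) (hlam : 0 < lam)
    (hf0 : ∀ x ∉ X, f x = 0) (hg0 : ∀ y ∉ Y, g y = 0)
    (hfb : ∀ x ∈ X, lam ≤ f x ∧ f x ≤ 1 / lam)
    (hgb : ∀ y ∈ Y, lam ≤ g y ∧ g y ≤ 1 / lam)
    (hfm : Measurable f) (hgm : Measurable g)
    (u : EuclideanSpace ℝ (Fin n) → ℝ) (hu : ConvexOn ℝ Set.univ u)
    (hum : Measurable fun x => gradient u x)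
    -- `(∇u)_♯ (f dx) = g dy`
    (hpush : Measure.map (fun x => gradient u x)
        (volume.withDensity fun x => ENNReal.ofReal (f x)) =
      volume.withDensity fun y => ENNReal.ofReal (g y))
    (A : Set (EuclideanSpace ℝ (Fin n))) (hA : MeasurableSet A) (hAX : A ⊆ X)
    -- `∂u(A) ⊆ Y` up to a Lebesgue-null set
    (hAY : volume (subimg u A \ Y) = 0) :
    volume (subimg u A) = ∫⁻ x in A, ENNReal.ofReal (f x / g (gradient u x)) := by
  classical
  have hYm : MeasurableSet Y := hYo.measurableSet
  have hcont : Continuous u := hu.locallyLipschitz.continuous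
  have hf_nonneg : ∀ x, 0 ≤ f x := by
    intro x
    by_cases hx : x ∈ X
    · exact le_trans hlam.le (hfb x hx).1
    · rw [hf0 x hx]
  have hgY : ∀ y ∈ Y, lam ≤ g y := fun y hy => (hgb y hy).1
  set c : ENNReal := ENNReal.ofReal (1 / lam * (1 / lam)) with hc
  have hc_ne_top : c ≠ ⊤ := ENNReal.ofReal_ne_top
  have hbound : ∀ x, ENNReal.ofReal (f x / g (gradient u x)) ≤ c := by
    intro x
    apply ENNReal.ofReal_le_ofReal
    by_cases hY : gradient u x ∈ Y
    · have h1 : lam ≤ g (gradient u x) := (hgb _ hY).1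
      have h2 : f x ≤ 1 / lam := by
        by_cases hx : x ∈ X
        · exact (hfb x hx).2
        · rw [hf0 x hx]; positivity
      calc f x / g (gradient u x) ≤ (1 / lam) / lam :=
            div_le_div₀ (by positivity) h2 hlam h1
        _ = 1 / lam * (1 / lam) := by ring
    · rw [hg0 _ hY, div_zero]
      positivity
  -- the integral as a function of the set
  have hIle : ∀ s : Set (EuclideanSpace ℝ (Fin n)),
      ∫⁻ x in s, ENNReal.ofReal (f x / g (gradient u x)) ≤ c * volume s := by
    intro s
    calc ∫⁻ x in s, ENNReal.ofReal (f x / g (gradient u x))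
        ≤ ∫⁻ _ in s, c := lintegral_mono fun x => hbound x
      _ = c * volume s := by rw [setLIntegral_const]
  have hstep1 : volume (subimg u A) = volume (subimg u A ∩ Y) := by
    refine le_antisymm ?_ (measure_mono inter_subset_left)
    calc volume (subimg u A)
        ≤ volume ((subimg u A ∩ Y) ∪ (subimg u A \ Y)) := by
          refine measure_mono fun y hy => ?_
          by_cases h : y ∈ Y
          exacts [Or.inl ⟨hy, h⟩, Or.inr ⟨hy, h⟩]
      _ ≤ volume (subimg u A ∩ Y) + volume (subimg u A \ Y) := measure_union_le _ _
      _ = volume (subimg u A ∩ Y) := by rw [hAY, add_zero]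
  have hAfin : volume A ≠ ⊤ := ((hXb.subset hAX).measure_lt_top).ne
  have hsub_mono : ∀ {s t : Set (EuclideanSpace ℝ (Fin n))}, s ⊆ t →
      subimg u s ⊆ subimg u t := fun hst => biUnion_subset_biUnion_left hst
  -- upper bound
  have upper : volume (subimg u A ∩ Y)
      ≤ ∫⁻ x in A, ENNReal.ofReal (f x / g (gradient u x)) := by
    refine ENNReal.le_of_forall_pos_le_add fun ε hε _ => ?_
    have hδ : (ε : ENNReal) / c ≠ 0 :=
      (ENNReal.div_pos (by exact_mod_cast hε.ne') hc_ne_top).ne'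
    obtain ⟨U, hAU, hUo, _, hUvol⟩ := hA.exists_isOpen_diff_lt hAfin hδ
    obtain ⟨K, hKc, hKU, hUK⟩ := exists_compact_exhaustion_open hUo
    have hUimg : subimg u U = ⋃ m, subimg u (K m) := by
      rw [hUK]
      exact biUnion_iUnion _ _
    have hBU : MeasurableSet (subimg u U ∩ Y) := by
      rw [hUimg]
      exact (MeasurableSet.iUnion fun m =>
        (isClosed_subimg hcont (hKc m)).measurableSet).inter hYm
    have h1 : volume (subimg u A ∩ Y) ≤ volume (subimg u U ∩ Y) :=
      measure_mono (inter_subset_inter_left _ (hsub_mono hAU))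
    rw [core_calc Y hYm f g lam hlam hf_nonneg hgY hfm hgm u hu hum hpush hg0 U
      hUo.measurableSet hBU] at h1
    have h2 : ∫⁻ x in U, ENNReal.ofReal (f x / g (gradient u x))
        ≤ (∫⁻ x in A, ENNReal.ofReal (f x / g (gradient u x)))
          + ∫⁻ x in U \ A, ENNReal.ofReal (f x / g (gradient u x)) := by
      have h2' := lintegral_union_le (μ := volume)
        (fun x => ENNReal.ofReal (f x / g (gradient u x))) A (U \ A)
      rwa [union_diff_cancel hAU] at h2'
    have h3 : ∫⁻ x in U \ A, ENNReal.ofReal (f x / g (gradient u x)) ≤ ε := by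
      calc ∫⁻ x in U \ A, ENNReal.ofReal (f x / g (gradient u x))
          ≤ c * volume (U \ A) := hIle _
        _ ≤ c * ((ε : ENNReal) / c) := by
            exact mul_le_mul_right hUvol.le c
        _ ≤ ε := ENNReal.mul_div_le
    calc volume (subimg u A ∩ Y)
        ≤ (∫⁻ x in A, ENNReal.ofReal (f x / g (gradient u x)))
          + ∫⁻ x in U \ A, ENNReal.ofReal (f x / g (gradient u x)) := h1.trans h2
      _ ≤ (∫⁻ x in A, ENNReal.ofReal (f x / g (gradient u x))) + ε := by
          exact add_le_add_right h3 _
  -- lower bound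
  have lower : (∫⁻ x in A, ENNReal.ofReal (f x / g (gradient u x)))
      ≤ volume (subimg u A ∩ Y) := by
    refine ENNReal.le_of_forall_pos_le_add fun ε hε _ => ?_
    have hδ : (ε : ENNReal) / c ≠ 0 :=
      (ENNReal.div_pos (by exact_mod_cast hε.ne') hc_ne_top).ne'
    obtain ⟨K, hKA, hKc, hKvol⟩ := hA.exists_isCompact_lt_add hAfin hδ
    have hKm : MeasurableSet K := hKc.isClosed.measurableSet
    have hdiff : volume (A \ K) < (ε : ENNReal) / c := by
      have hKfin : volume K ≠ ⊤ := (lt_of_le_of_lt (measure_mono hKA)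
        (lt_top_iff_ne_top.2 hAfin)).ne
      rw [measure_diff hKA hKm.nullMeasurableSet hKfin]
      exact ENNReal.sub_lt_of_lt_add (measure_mono hKA) (by rwa [add_comm] at hKvol)
    have hBK : MeasurableSet (subimg u K ∩ Y) :=
      (isClosed_subimg hcont hKc).measurableSet.inter hYm
    have h0 := core_calc Y hYm f g lam hlam hf_nonneg hgY hfm hgm u hu hum hpush hg0 K
      hKm hBK
    have h2 : (∫⁻ x in A, ENNReal.ofReal (f x / g (gradient u x)))
        ≤ (∫⁻ x in K, ENNReal.ofReal (f x / g (gradient u x)))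
          + ∫⁻ x in A \ K, ENNReal.ofReal (f x / g (gradient u x)) := by
      have h2' := lintegral_union_le (μ := volume)
        (fun x => ENNReal.ofReal (f x / g (gradient u x))) K (A \ K)
      rwa [union_diff_cancel hKA] at h2'
    have h3 : ∫⁻ x in A \ K, ENNReal.ofReal (f x / g (gradient u x)) ≤ ε := by
      calc ∫⁻ x in A \ K, ENNReal.ofReal (f x / g (gradient u x))
          ≤ c * volume (A \ K) := hIle _
        _ ≤ c * ((ε : ENNReal) / c) := mul_le_mul_right hdiff.le c
        _ ≤ ε := ENNReal.mul_div_le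
    calc (∫⁻ x in A, ENNReal.ofReal (f x / g (gradient u x)))
        ≤ (∫⁻ x in K, ENNReal.ofReal (f x / g (gradient u x)))
          + ∫⁻ x in A \ K, ENNReal.ofReal (f x / g (gradient u x)) := h2
      _ = volume (subimg u K ∩ Y)
          + ∫⁻ x in A \ K, ENNReal.ofReal (f x / g (gradient u x)) := by rw [h0]
      _ ≤ volume (subimg u A ∩ Y) + ε := by
          exact add_le_add (measure_mono (inter_subset_inter_left _ (hsub_mono hKA))) h3
  rw [hstep1]
  exact le_antisymm upper lower
end
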